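/- Let I ≥ 2 be an integer, set β := (I+1 − log(I+1))/(I+1 + log(I+1)) where log is the natural logarithm, and let B be a nonempty finite set of integers with B ⊆ {1, …, ⌊I/2⌋}. Let W_1, …, W_I be independent square-integrable real random variables with common mean m and E[(W_i − m)²] ≤ σ² for all i, for some σ ≥ 0. For each k ∈ B define Q_k := β^{I−k} W_k + (1−β) Σ_{i=k+1}^{I} β^{I−i} W_i, and let (Y_k)_{k∈B} be integrable real random variables with Y_k ≤ Q_k almost surely for each k ∈ B. Then E[ max_{k∈B} Y_k ] − m ≤ 4σ √(|B|−1) · √(log(I+1)) / √(I+1). -/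

import Mathlib

open MeasureTheory ProbabilityTheory

open Finset


lemma aux_sup' {B : Finset ℕ} (hBne : B.Nonempty) {k0 : ℕ} (hk0 : k0 ∈ B) (g : ℕ → ℝ) :
    B.sup' hBne g ≤ g k0 + Real.sqrt (∑ k ∈ B.erase k0, (g k - g k0)^2) := by
  apply Finset.sup'_le
  intro k hk
  rcases eq_or_ne k k0 with rfl | hne
  · nlinarith [Real.sqrt_nonneg (∑ j ∈ B.erase k, (g j - g k)^2)]
  · have hmem : k ∈ B.erase k0 := Finset.mem_erase.2 ⟨hne, hk⟩
    have h1 : (g k - g k0)^2 ≤ ∑ j ∈ B.erase k0, (g j - g k0)^2 :=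
      Finset.single_le_sum (f := fun j => (g j - g k0)^2) (fun j _ => sq_nonneg _) hmem
    have h2 := Real.sqrt_le_sqrt h1
    rw [Real.sqrt_sq_eq_abs] at h2
    have := le_abs_self (g k - g k0)
    linarith

lemma aux_cs {Ω : Type*} [MeasurableSpace Ω] {μ : Measure Ω} [IsProbabilityMeasure μ]
    {g : Ω → ℝ} (hg : ∀ ω, 0 ≤ g ω) (hg2 : MemLp g 2 μ) :
    ∫ ω, g ω ∂μ ≤ Real.sqrt (∫ ω, (g ω)^2 ∂μ) := by
  have hpq : Real.HolderConjugate 2 2 := by constructor <;> norm_num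
  have h1 : MemLp (fun _ : Ω => (1:ℝ)) (ENNReal.ofReal 2) μ := by
    simpa using (memLp_const (1:ℝ) : MemLp _ (ENNReal.ofReal 2) μ)
  have := MeasureTheory.integral_mul_le_Lp_mul_Lq_of_nonneg hpq
    (f := g) (g := fun _ => (1:ℝ)) (Filter.Eventually.of_forall hg)
    (Filter.Eventually.of_forall fun _ => zero_le_one)
    (by simpa using hg2) h1
  simp only [mul_one, one_pow] at this
  calc ∫ ω, g ω ∂μ ≤ (∫ ω, g ω ^ (2:ℝ) ∂μ) ^ ((1:ℝ)/2) * (∫ _ω, (1:ℝ) ∂μ) ^ ((1:ℝ)/2) := by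
        simpa using this
    _ = Real.sqrt (∫ ω, (g ω)^2 ∂μ) := by
        rw [integral_const]
        simp [Real.sqrt_eq_rpow]

lemma aux_L2mul {Ω : Type*} [MeasurableSpace Ω] {μ : Measure Ω}
    {f g : Ω → ℝ} (hf : MemLp f 2 μ) (hg : MemLp g 2 μ) :
    Integrable (fun ω => f ω * g ω) μ := by
  have h1 := hf.integrable_sq
  have h2 := hg.integrable_sq
  refine Integrable.mono' (((h1.add h2).div_const 2)) (hf.1.mul hg.1) ?_
  filter_upwards with ω
  have : |f ω * g ω| ≤ (f ω ^ 2 + g ω ^ 2) / 2 := by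
    rw [abs_mul]
    nlinarith [sq_nonneg (|f ω| - |g ω|), sq_abs (f ω), sq_abs (g ω), abs_nonneg (f ω), abs_nonneg (g ω)]
  simpa [abs_mul] using this

lemma aux_geom_reindex (x : ℝ) (k I : ℕ) (hk : k ≤ I) :
    ∑ i ∈ Finset.Icc (k+1) I, x^(I - i) = ∑ j ∈ Finset.range (I - k), x^j := by
  apply Finset.sum_nbij' (i := fun i => I - i) (j := fun j => I - j)
  · intro a ha; simp only [Finset.mem_Icc] at ha; simp only [Finset.mem_range]; omega
  · intro a ha; simp only [Finset.mem_range] at ha; simp only [Finset.mem_Icc]; omega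
  · intro a ha; simp only [Finset.mem_Icc] at ha; omega
  · intro a ha; simp only [Finset.mem_range] at ha; omega
  · intro a ha; rfl

lemma aux_integrable_sup' {Ω : Type*} [MeasurableSpace Ω] {μ : Measure Ω}
    (B : Finset ℕ) (hBne : B.Nonempty) (f : ℕ → Ω → ℝ)
    (hf : ∀ k ∈ B, Integrable (f k) μ) :
    Integrable (fun ω => B.sup' hBne fun k => f k ω) μ := by
  induction hBne using Finset.Nonempty.cons_induction with
  | singleton a =>
    simp only [Finset.sup'_singleton]
    exact hf a (by simp)
  | cons a s ha hs ih =>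
    simp only [Finset.sup'_cons (H := hs)]
    exact (hf a (by simp)).sup (ih fun k hk => hf k (Finset.mem_cons_of_mem hk))

lemma aux_var {Ω : Type*} [MeasurableSpace Ω] {μ : Measure Ω} [IsProbabilityMeasure μ]
    (s : Finset ℕ) (w : ℕ → ℝ) (X : ℕ → Ω → ℝ)
    (hX2 : ∀ i ∈ s, MemLp (X i) 2 μ)
    (hcross : ∀ i ∈ s, ∀ j ∈ s, i ≠ j → (∫ ω, X i ω * X j ω ∂μ) = 0)
    (σ2 : ℝ) (hσ2 : 0 ≤ σ2) (hvar : ∀ i ∈ s, (∫ ω, (X i ω)^2 ∂μ) ≤ σ2) :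
    (∫ ω, (∑ i ∈ s, w i * X i ω)^2 ∂μ) ≤ σ2 * ∑ i ∈ s, (w i)^2 := by
  have hint : ∀ i ∈ s, ∀ j ∈ s, Integrable (fun ω => w i * X i ω * (w j * X j ω)) μ := by
    intro i hi j hj
    have := aux_L2mul (hX2 i hi) (hX2 j hj)
    have h2 : Integrable (fun ω => (w i * w j) * (X i ω * X j ω)) μ := this.const_mul _
    refine h2.congr (Filter.Eventually.of_forall fun ω => by ring)
  have hexp : (∫ ω, (∑ i ∈ s, w i * X i ω)^2 ∂μ)
      = ∑ i ∈ s, ∑ j ∈ s, w i * w j * ∫ ω, X i ω * X j ω ∂μ := by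
    have h1 : (∫ ω, (∑ i ∈ s, w i * X i ω)^2 ∂μ)
        = ∫ ω, ∑ i ∈ s, ∑ j ∈ s, w i * X i ω * (w j * X j ω) ∂μ := by
      congr 1; funext ω; rw [sq, Finset.sum_mul_sum]
    rw [h1, integral_finset_sum]
    · apply Finset.sum_congr rfl
      intro i hi
      rw [integral_finset_sum _ (fun j hj => hint i hi j hj)]
      apply Finset.sum_congr rfl
      intro j hj
      rw [show (fun ω => w i * X i ω * (w j * X j ω)) = fun ω => (w i * w j) * (X i ω * X j ω) by funext ω; ring,
        integral_const_mul]
    · intro i hi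
      exact integrable_finset_sum _ (fun j hj => hint i hi j hj)
  rw [hexp]
  have hdiag : ∀ i ∈ s, (∑ j ∈ s, w i * w j * ∫ ω, X i ω * X j ω ∂μ)
      = w i ^ 2 * ∫ ω, (X i ω)^2 ∂μ := by
    intro i hi
    rw [Finset.sum_eq_single_of_mem i hi]
    · have h : (∫ ω, X i ω * X i ω ∂μ) = ∫ ω, (X i ω)^2 ∂μ := by
        apply integral_congr_ae; filter_upwards with ω; rw [sq]
      rw [h]; ring
    · intro j hj hne
      rw [hcross i hi j hj (fun h => hne h.symm), mul_zero]
  calc (∑ i ∈ s, ∑ j ∈ s, w i * w j * ∫ ω, X i ω * X j ω ∂μ)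
      = ∑ i ∈ s, w i ^ 2 * ∫ ω, (X i ω)^2 ∂μ := Finset.sum_congr rfl hdiag
    _ ≤ ∑ i ∈ s, w i ^ 2 * σ2 := by
        apply Finset.sum_le_sum
        intro i hi
        exact mul_le_mul_of_nonneg_left (hvar i hi) (sq_nonneg _)
    _ = σ2 * ∑ i ∈ s, (w i)^2 := by rw [Finset.mul_sum]; apply Finset.sum_congr rfl; intros; ring

lemma aux_sumw (β : ℝ) (hβ1 : β ≠ 1) (I k : ℕ) (hk : k ≤ I) :
    β^(I-k) + (1-β) * ∑ i ∈ Finset.Icc (k+1) I, β^(I-i) = 1 := by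
  rw [aux_geom_reindex β k I hk, geom_sum_eq hβ1]
  have : β - 1 ≠ 0 := sub_ne_zero.mpr hβ1
  field_simp
  ring

lemma aux_S2 (β t : ℝ) (ht0 : 0 < t) (ht1 : t < 1) (hβt : β = (1-t)/(1+t))
    (I k : ℕ) (hk2 : 2*k ≤ I)
    (hexp : (((I:ℝ)+1))⁻¹ ≤ t) (htI : Real.exp (-(t * ((I:ℝ)+1))) = (((I:ℝ)+1))⁻¹) :
    (β^(I-k))^2 + (1-β)^2 * ∑ i ∈ Finset.Icc (k+1) I, (β^(I-i))^2 ≤ 2*t := by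
  have h1t : (0:ℝ) < 1 + t := by linarith
  have hβ0 : 0 ≤ β := by rw [hβt]; apply div_nonneg <;> linarith
  have hβ1 : β < 1 := by rw [hβt, div_lt_one h1t]; linarith
  have hβne : β ≠ 1 := ne_of_lt hβ1
  have hb2 : β^2 ≠ 1 := by nlinarith
  set n := I - k with hn_def
  have hkI : k ≤ I := by omega
  have hn : I + 1 ≤ 2*n + 1 := by omega
  have hsq : ∀ i : ℕ, (β^(I-i))^2 = (β^2)^(I-i) := by
    intro i; rw [← pow_mul, ← pow_mul]; ring_nf
  have hre : ∑ i ∈ Finset.Icc (k+1) I, (β^(I-i))^2 = ∑ j ∈ Finset.range n, (β^2)^j := by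
    rw [Finset.sum_congr rfl (fun i _ => hsq i), aux_geom_reindex (β^2) k I hkI]
  rw [hre, geom_sum_eq hb2]
  set z := (β^n)^2 with hz_def
  have hzval : (β^2)^n = z := by rw [hz_def, ← pow_mul, ← pow_mul]; ring_nf
  rw [hzval]
  have hr : (1-β)/(1+β) = t := by
    rw [hβt]
    have : (1:ℝ) + t ≠ 0 := ne_of_gt h1t
    field_simp
    ring
  have hkey : (1-β)^2 * ((z - 1)/(β^2 - 1)) = t * (1 - z) := by
    rw [← hr]
    have h1 : β^2 - 1 ≠ 0 := sub_ne_zero.mpr hb2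
    have h2 : (1:ℝ) + β ≠ 0 := by positivity
    field_simp
    ring
  rw [hkey]
  -- now: z + t * (1 - z) ≤ 2 * t, i.e. (1-t) * z ≤ t
  have hβle : β ≤ 1 - t := by
    rw [hβt, div_le_iff₀ h1t]; nlinarith
  have h1t0 : (0:ℝ) ≤ 1 - t := le_trans hβ0 hβle
  have hz1 : z = β^(2*n) := by rw [hz_def, ← pow_mul]; ring_nf
  have h1 : β^(2*n) ≤ (1-t)^(2*n) := pow_le_pow_left₀ hβ0 hβle _
  have h3 : (1-t)^(2*n+1) ≤ (1-t)^(I+1) := pow_le_pow_of_le_one h1t0 (by linarith) hn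
  have h4 : (1-t)^(I+1) ≤ (Real.exp (-t))^(I+1) :=
    pow_le_pow_left₀ h1t0 (by nlinarith [Real.add_one_le_exp (-t)]) _
  have h5 : (Real.exp (-t))^(I+1) = Real.exp (-(t*((I:ℝ)+1))) := by
    rw [← Real.exp_nat_mul]; congr 1; push_cast; ring
  have hfin : (1-t) * z ≤ t := by
    calc (1-t) * z = (1-t) * β^(2*n) := by rw [hz1]
      _ ≤ (1-t) * (1-t)^(2*n) := mul_le_mul_of_nonneg_left h1 h1t0
      _ = (1-t)^(2*n+1) := by rw [pow_succ]; ring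
      _ ≤ (1-t)^(I+1) := h3
      _ ≤ (Real.exp (-t))^(I+1) := h4
      _ = (((I:ℝ)+1))⁻¹ := by rw [h5, htI]
      _ ≤ t := hexp
  nlinarith [hfin]

/-- Noise bound for the max-one-cut model: if each `Y_k` is dominated by the
geometric convex combination `Q_k = β^{I-k} W_k + (1-β) Σ_{i=k+1}^I β^{I-i} W_i`
of independent variables with mean `m` and variance at most `σ²`, then
`E[max_{k ∈ B} Y_k] - m ≤ 4 σ √(|B|-1) √(log(I+1)) / √(I+1)`. -/
theorem stmt6 {Ω : Type*} [MeasurableSpace Ω] {μ : Measure Ω}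
    [IsProbabilityMeasure μ]
    (I : ℕ) (hI : 2 ≤ I)
    (β : ℝ)
    (hβ : β = ((I : ℝ) + 1 - Real.log ((I : ℝ) + 1))
        / ((I : ℝ) + 1 + Real.log ((I : ℝ) + 1)))
    (B : Finset ℕ) (hBne : B.Nonempty) (hBsub : ∀ k ∈ B, 1 ≤ k ∧ k ≤ I / 2)
    (W : ℕ → Ω → ℝ)
    (hWmeas : ∀ i, 1 ≤ i → i ≤ I → Measurable (W i))
    (hindep : iIndepFun
      (fun i : {x // x ∈ Finset.Icc 1 I} => W i.1) μ)
    (m σ : ℝ) (hσ : 0 ≤ σ)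
    (hW2 : ∀ i, 1 ≤ i → i ≤ I → MemLp (W i) 2 μ)
    (hWmean : ∀ i, 1 ≤ i → i ≤ I → (∫ ω, W i ω ∂μ) = m)
    (hWvar : ∀ i, 1 ≤ i → i ≤ I → (∫ ω, (W i ω - m) ^ 2 ∂μ) ≤ σ ^ 2)
    (Q : ℕ → Ω → ℝ)
    (hQ : ∀ k ∈ B, ∀ ω, Q k ω = β ^ (I - k) * W k ω
        + (1 - β) * ∑ i ∈ Finset.Icc (k + 1) I, β ^ (I - i) * W i ω)
    (Y : ℕ → Ω → ℝ)
    (hYint : ∀ k ∈ B, Integrable (Y k) μ)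
    (hYQ : ∀ k ∈ B, ∀ᵐ ω ∂μ, Y k ω ≤ Q k ω) :
    (∫ ω, (B.sup' hBne fun k => Y k ω) ∂μ) - m
      ≤ 4 * σ * Real.sqrt ((B.card : ℝ) - 1)
          * Real.sqrt (Real.log ((I : ℝ) + 1)) / Real.sqrt ((I : ℝ) + 1) := by
  classical
  -- numeric setup
  have hI3 : (3:ℝ) ≤ (I:ℝ)+1 := by
    have : (2:ℝ) ≤ (I:ℝ) := by exact_mod_cast hI
    linarith
  have hN0 : (0:ℝ) < (I:ℝ)+1 := by linarith
  have hL1 : 1 ≤ Real.log ((I:ℝ)+1) := by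
    rw [Real.le_log_iff_exp_le hN0]
    calc Real.exp 1 ≤ 2.7182818286 := Real.exp_one_lt_d9.le
      _ ≤ (I:ℝ)+1 := by linarith
  have hLN : Real.log ((I:ℝ)+1) < (I:ℝ)+1 :=
    lt_of_le_of_lt (Real.log_le_sub_one_of_pos hN0) (by linarith)
  set t : ℝ := Real.log ((I:ℝ)+1) / ((I:ℝ)+1) with ht_def
  have ht0 : 0 < t := div_pos (by linarith) hN0
  have ht1 : t < 1 := (div_lt_one hN0).2 hLN
  have h1t : (0:ℝ) < 1+t := by linarith
  have htI : t * ((I:ℝ)+1) = Real.log ((I:ℝ)+1) := by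
    rw [ht_def]; field_simp
  have hexpt : Real.exp (-(t*((I:ℝ)+1))) = (((I:ℝ)+1))⁻¹ := by
    rw [htI, Real.exp_neg, Real.exp_log hN0]
  have hinvt : (((I:ℝ)+1))⁻¹ ≤ t := by
    rw [ht_def, inv_eq_one_div]
    gcongr
  have hβt : β = (1-t)/(1+t) := by
    have hden : (I:ℝ)+1 + Real.log ((I:ℝ)+1) ≠ 0 := by positivity
    have hNne : (I:ℝ)+1 ≠ 0 := ne_of_gt hN0
    rw [hβ, ht_def]
    field_simp
  have hβ0 : 0 ≤ β := by rw [hβt]; apply div_nonneg <;> linarith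
  have hβ1 : β < 1 := by rw [hβt, div_lt_one h1t]; linarith
  have hβne : β ≠ 1 := ne_of_lt hβ1
  -- index facts
  have hkfacts : ∀ k ∈ B, 1 ≤ k ∧ 2*k ≤ I := by
    intro k hk
    obtain ⟨h1, h2⟩ := hBsub k hk
    exact ⟨h1, by omega⟩
  -- centered variables
  set X : ℕ → Ω → ℝ := fun i ω => W i ω - m with hX_def
  have hX2 : ∀ i, 1 ≤ i → i ≤ I → MemLp (X i) 2 μ := fun i h1 h2 =>
    (hW2 i h1 h2).sub (memLp_const m)
  have hXint : ∀ i, 1 ≤ i → i ≤ I → Integrable (X i) μ := fun i h1 h2 =>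
    (hX2 i h1 h2).integrable one_le_two
  have hXmean : ∀ i, 1 ≤ i → i ≤ I → (∫ ω, X i ω ∂μ) = 0 := by
    intro i h1 h2
    rw [hX_def]
    simp only
    rw [integral_sub ((hW2 i h1 h2).integrable one_le_two) (integrable_const m),
      hWmean i h1 h2, integral_const]
    simp
  have hcross : ∀ i, 1 ≤ i → i ≤ I → ∀ j, 1 ≤ j → j ≤ I → i ≠ j →
      (∫ ω, X i ω * X j ω ∂μ) = 0 := by
    intro i hi1 hi2 j hj1 hj2 hne
    have hi' : i ∈ Finset.Icc 1 I := Finset.mem_Icc.2 ⟨hi1, hi2⟩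
    have hj' : j ∈ Finset.Icc 1 I := Finset.mem_Icc.2 ⟨hj1, hj2⟩
    have hind : IndepFun (W i) (W j) μ :=
      hindep.indepFun (i := ⟨i, hi'⟩) (j := ⟨j, hj'⟩)
        (fun h => hne (congrArg Subtype.val h))
    have hφ : Measurable (fun x : ℝ => x - m) := measurable_id.sub_const m
    have hind2 : IndepFun (X i) (X j) μ := hind.comp hφ hφ
    have := hind2.integral_mul_eq_mul_integral (hXint i hi1 hi2).1 (hXint j hj1 hj2).1
    calc (∫ ω, X i ω * X j ω ∂μ) = ∫ ω, (X i * X j) ω ∂μ := rfl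
      _ = (∫ ω, X i ω ∂μ) * (∫ ω, X j ω ∂μ) := this
      _ = 0 := by rw [hXmean i hi1 hi2]; ring
  -- weights
  set w : ℕ → ℕ → ℝ := fun k i => if i = k then β^(I-k) else (1-β)*β^(I-i) with hw_def
  -- decomposition of Q k - m
  have hQdec : ∀ k ∈ B, ∀ ω, Q k ω - m = ∑ i ∈ Finset.Icc k I, w k i * X i ω := by
    intro k hk ω
    obtain ⟨hk1, hk2⟩ := hkfacts k hk
    have hkI : k ≤ I := by omega
    have hknot : k ∉ Finset.Icc (k+1) I := by simp [Finset.mem_Icc]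
    have hcons : Finset.Icc k I = Finset.cons k (Finset.Icc (k+1) I) hknot := by
      ext x; simp only [Finset.mem_Icc, Finset.mem_cons]; omega
    have hsum1 := aux_sumw β hβne I k hkI
    rw [hcons, Finset.sum_cons]
    have hterm : ∀ i ∈ Finset.Icc (k+1) I, w k i * X i ω
        = (1-β) * (β^(I-i) * W i ω) - (1-β) * (β^(I-i) * m) := by
      intro i hi
      simp only [Finset.mem_Icc] at hi
      have hik : i ≠ k := by omega
      simp only [hw_def, hX_def, if_neg hik]
      ring
    rw [Finset.sum_congr rfl hterm, Finset.sum_sub_distrib, ← Finset.mul_sum, ← Finset.mul_sum,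
      ← Finset.sum_mul]
    simp only [hw_def, hX_def, if_pos rfl]
    rw [hQ k hk ω]
    linear_combination m * hsum1
  -- L² membership of Q
  have hQmem : ∀ k ∈ B, MemLp (Q k) 2 μ := by
    intro k hk
    obtain ⟨hk1, hk2⟩ := hkfacts k hk
    have h1 : MemLp (fun ω => (∑ i ∈ Finset.Icc k I, w k i * X i ω) + m) 2 μ := by
      apply MemLp.add _ (memLp_const m)
      apply memLp_finset_sum
      intro i hi
      simp only [Finset.mem_Icc] at hi
      exact (hX2 i (by omega) (by omega)).const_mul _
    have heq : Q k = fun ω => (∑ i ∈ Finset.Icc k I, w k i * X i ω) + m := by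
      funext ω
      have := hQdec k hk ω
      linarith
    rw [heq]; exact h1
  have hQint : ∀ k ∈ B, Integrable (Q k) μ := fun k hk =>
    (hQmem k hk).integrable one_le_two
  -- mean of Q
  have hQmean : ∀ k ∈ B, (∫ ω, Q k ω ∂μ) = m := by
    intro k hk
    obtain ⟨hk1, hk2⟩ := hkfacts k hk
    have heq : (∫ ω, Q k ω ∂μ) = ∫ ω, ((∑ i ∈ Finset.Icc k I, w k i * X i ω) + m) ∂μ := by
      congr 1; funext ω; have := hQdec k hk ω; linarith
    rw [heq, integral_add _ (integrable_const m)]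
    · rw [integral_finset_sum]
      · have : ∀ i ∈ Finset.Icc k I, (∫ ω, w k i * X i ω ∂μ) = 0 := by
          intro i hi
          simp only [Finset.mem_Icc] at hi
          rw [integral_const_mul, hXmean i (by omega) (by omega), mul_zero]
        rw [Finset.sum_congr rfl this]
        simp
      · intro i hi
        simp only [Finset.mem_Icc] at hi
        exact (hXint i (by omega) (by omega)).const_mul _
    · apply integrable_finset_sum
      intro i hi
      simp only [Finset.mem_Icc] at hi
      exact (hXint i (by omega) (by omega)).const_mul _
  -- variance bound for Q
  have hQvar : ∀ k ∈ B, (∫ ω, (Q k ω - m)^2 ∂μ) ≤ 2*σ^2*t := by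
    intro k hk
    obtain ⟨hk1, hk2⟩ := hkfacts k hk
    have hkI : k ≤ I := by omega
    have heq : (∫ ω, (Q k ω - m)^2 ∂μ)
        = ∫ ω, (∑ i ∈ Finset.Icc k I, w k i * X i ω)^2 ∂μ := by
      congr 1; funext ω; rw [hQdec k hk ω]
    rw [heq]
    have hvar := aux_var (Finset.Icc k I) (w k) X
      (fun i hi => by simp only [Finset.mem_Icc] at hi; exact hX2 i (by omega) (by omega))
      (fun i hi j hj hne => by
        simp only [Finset.mem_Icc] at hi hj
        exact hcross i (by omega) (by omega) j (by omega) (by omega) hne)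
      (σ^2) (sq_nonneg σ)
      (fun i hi => by
        simp only [Finset.mem_Icc] at hi
        exact hWvar i (by omega) (by omega))
    refine le_trans hvar ?_
    -- σ² * Σ w² ≤ 2σ²t
    have hS2 : (∑ i ∈ Finset.Icc k I, (w k i)^2) ≤ 2*t := by
      have hknot : k ∉ Finset.Icc (k+1) I := by simp [Finset.mem_Icc]
      have hcons : Finset.Icc k I = Finset.cons k (Finset.Icc (k+1) I) hknot := by
        ext x; simp only [Finset.mem_Icc, Finset.mem_cons]; omega
      rw [hcons, Finset.sum_cons]
      have hterm : ∀ i ∈ Finset.Icc (k+1) I, (w k i)^2 = (1-β)^2 * (β^(I-i))^2 := by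
        intro i hi
        simp only [Finset.mem_Icc] at hi
        have hik : i ≠ k := by omega
        simp only [hw_def, if_neg hik]
        ring
      rw [Finset.sum_congr rfl hterm, ← Finset.mul_sum]
      simp only [hw_def, if_pos rfl]
      exact aux_S2 β t ht0 ht1 hβt I k hk2 hinvt hexpt
    calc σ^2 * ∑ i ∈ Finset.Icc k I, (w k i)^2 ≤ σ^2 * (2*t) :=
          mul_le_mul_of_nonneg_left hS2 (sq_nonneg σ)
      _ = 2*σ^2*t := by ring
  -- main assembly
  obtain ⟨k0, hk0⟩ := hBne.exists_mem
  set R : Ω → ℝ := fun ω => Real.sqrt (∑ k ∈ B.erase k0, (Q k ω - Q k0 ω)^2) with hR_def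
  have hQsub2 : ∀ k ∈ B, MemLp (fun ω => Q k ω - Q k0 ω) 2 μ := fun k hk =>
    (hQmem k hk).sub (hQmem k0 hk0)
  have hsum2int : Integrable (fun ω => ∑ k ∈ B.erase k0, (Q k ω - Q k0 ω)^2) μ := by
    apply integrable_finset_sum
    intro k hk
    exact (hQsub2 k (Finset.mem_of_mem_erase hk)).integrable_sq
  have hRsq : ∀ ω, R ω ^ 2 = ∑ k ∈ B.erase k0, (Q k ω - Q k0 ω)^2 := fun ω =>
    Real.sq_sqrt (Finset.sum_nonneg fun k _ => sq_nonneg _)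
  have hRnonneg : ∀ ω, 0 ≤ R ω := fun ω => Real.sqrt_nonneg _
  have hRmeas : AEStronglyMeasurable R μ :=
    Real.continuous_sqrt.comp_aestronglyMeasurable hsum2int.1
  have hRmem : MemLp R 2 μ := by
    rw [memLp_two_iff_integrable_sq hRmeas]
    exact hsum2int.congr (Filter.Eventually.of_forall fun ω => (hRsq ω).symm)
  have hRint : Integrable R μ := hRmem.integrable one_le_two
  -- step 1
  have step1 : (∫ ω, (B.sup' hBne fun k => Y k ω) ∂μ) ≤ ∫ ω, (Q k0 ω + R ω) ∂μ := by
    apply integral_mono_ae (aux_integrable_sup' B hBne Y hYint) ((hQint k0 hk0).add hRint)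
    have hae : ∀ᵐ ω ∂μ, ∀ k ∈ B, Y k ω ≤ Q k ω :=
      (ae_ball_iff B.countable_toSet).2 hYQ
    filter_upwards [hae] with ω hω
    apply Finset.sup'_le
    intro k hk
    calc Y k ω ≤ Q k ω := hω k hk
      _ ≤ B.sup' hBne (fun j => Q j ω) := Finset.le_sup' (fun j => Q j ω) hk
      _ ≤ Q k0 ω + R ω := aux_sup' hBne hk0 (fun k => Q k ω)
  have step2 : (∫ ω, (Q k0 ω + R ω) ∂μ) = m + ∫ ω, R ω ∂μ := by
    rw [integral_add (hQint k0 hk0) hRint, hQmean k0 hk0]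
  have step3 : (∫ ω, R ω ∂μ) ≤ Real.sqrt (∫ ω, (R ω)^2 ∂μ) := aux_cs hRnonneg hRmem
  -- bound on ∫ R²
  have hc0 : (1:ℕ) ≤ B.card := Finset.card_pos.2 ⟨k0, hk0⟩
  have hccast : ((B.card - 1 : ℕ) : ℝ) = (B.card : ℝ) - 1 := by
    push_cast [Nat.cast_sub hc0]; ring
  have hc0' : (0:ℝ) ≤ (B.card:ℝ) - 1 := by
    have : (1:ℝ) ≤ (B.card:ℝ) := by exact_mod_cast hc0
    linarith
  have step4 : (∫ ω, (R ω)^2 ∂μ) ≤ ((B.card:ℝ) - 1) * (8*σ^2*t) := by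
    have h1 : (∫ ω, (R ω)^2 ∂μ)
        = ∑ k ∈ B.erase k0, ∫ ω, (Q k ω - Q k0 ω)^2 ∂μ := by
      rw [show (fun ω => (R ω)^2) = fun ω => ∑ k ∈ B.erase k0, (Q k ω - Q k0 ω)^2 from
        funext hRsq]
      exact integral_finset_sum _ fun k hk =>
        (hQsub2 k (Finset.mem_of_mem_erase hk)).integrable_sq
    rw [h1]
    have h2 : ∀ k ∈ B.erase k0, (∫ ω, (Q k ω - Q k0 ω)^2 ∂μ) ≤ 8*σ^2*t := by
      intro k hk
      have hkB := Finset.mem_of_mem_erase hk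
      have hptw : ∀ ω, (Q k ω - Q k0 ω)^2 ≤ 2*(Q k ω - m)^2 + 2*(Q k0 ω - m)^2 := by
        intro ω; nlinarith [sq_nonneg (Q k ω + Q k0 ω - 2*m)]
      have hintk : Integrable (fun ω => (Q k ω - m)^2) μ :=
        ((hQmem k hkB).sub (memLp_const m)).integrable_sq
      have hintk0 : Integrable (fun ω => (Q k0 ω - m)^2) μ :=
        ((hQmem k0 hk0).sub (memLp_const m)).integrable_sq
      calc (∫ ω, (Q k ω - Q k0 ω)^2 ∂μ)
          ≤ ∫ ω, (2*(Q k ω - m)^2 + 2*(Q k0 ω - m)^2) ∂μ := by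
            apply integral_mono_ae ((hQsub2 k hkB).integrable_sq)
              (((hintk.const_mul 2)).add ((hintk0.const_mul 2)))
            exact Filter.Eventually.of_forall hptw
        _ = 2*(∫ ω, (Q k ω - m)^2 ∂μ) + 2*(∫ ω, (Q k0 ω - m)^2 ∂μ) := by
            rw [integral_add (hintk.const_mul 2) (hintk0.const_mul 2),
              integral_const_mul, integral_const_mul]
        _ ≤ 2*(2*σ^2*t) + 2*(2*σ^2*t) := by
            have hA := hQvar k hkB
            have hB := hQvar k0 hk0
            gcongr
        _ = 8*σ^2*t := by ring
    calc (∑ k ∈ B.erase k0, ∫ ω, (Q k ω - Q k0 ω)^2 ∂μ)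
        ≤ (B.erase k0).card • (8*σ^2*t) := Finset.sum_le_card_nsmul _ _ _ h2
      _ = ((B.erase k0).card : ℝ) * (8*σ^2*t) := nsmul_eq_mul _ _
      _ = ((B.card:ℝ) - 1) * (8*σ^2*t) := by
          rw [Finset.card_erase_of_mem hk0, hccast]
  -- step 5 : sqrt algebra
  have step5 : Real.sqrt (((B.card:ℝ) - 1) * (8*σ^2*t))
      ≤ 4 * σ * Real.sqrt ((B.card : ℝ) - 1)
          * Real.sqrt (Real.log ((I : ℝ) + 1)) / Real.sqrt ((I : ℝ) + 1) := by
    have h1 : ((B.card:ℝ) - 1) * (8*σ^2*t) ≤ (4*σ)^2 * (((B.card:ℝ) - 1) * t) := by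
      nlinarith [mul_nonneg hc0' (le_of_lt ht0)]
    calc Real.sqrt (((B.card:ℝ) - 1) * (8*σ^2*t))
        ≤ Real.sqrt ((4*σ)^2 * (((B.card:ℝ) - 1) * t)) := Real.sqrt_le_sqrt h1
      _ = (4*σ) * (Real.sqrt ((B.card:ℝ) - 1) * Real.sqrt t) := by
          rw [Real.sqrt_mul (sq_nonneg _), Real.sqrt_sq (by linarith : (0:ℝ) ≤ 4*σ),
            Real.sqrt_mul hc0']
      _ = 4 * σ * Real.sqrt ((B.card : ℝ) - 1)
          * Real.sqrt (Real.log ((I : ℝ) + 1)) / Real.sqrt ((I : ℝ) + 1) := by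
          rw [ht_def, Real.sqrt_div (by linarith : (0:ℝ) ≤ Real.log ((I:ℝ)+1))]
          ring
  have chain : Real.sqrt (∫ ω, (R ω)^2 ∂μ) ≤ Real.sqrt (((B.card:ℝ) - 1) * (8*σ^2*t)) :=
    Real.sqrt_le_sqrt step4
  linarith [step1, step2, step3, chain, step5]
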